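/- arXiv:math/0602103 — 2 statements merged into one kernel-verified Lean document; each statement's English description precedes it below -/
import Mathlib

section
/- Every automorphism of the skeleton category _S𝒜⁰_Sk of finitely generated free left S-acts is semi-inner. -/
open CategoryTheory

/-- `f : S × X → S × Y` is a homomorphism of free left `S`-acts, where the action of
`S` on `S × X` is `s • (t, x) = (s * t, x)`. -/
def IsActHom (S : Type) [Monoid S] {X Y : Type} (f : S × X → S × Y) : Prop :=
  ∀ (s : S) (p : S × X), f (s * p.1, p.2) = (s * (f p).1, (f p).2)

/-- The skeleton category `_S𝒜⁰_Sk` of finitely generated free left `S`-acts: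
objects are natural numbers `n`, standing for the free act `Fₙ = S × Fin n`. -/
def SkFree (S : Type) [Monoid S] : Type := ℕ

/-- The category structure on `_S𝒜⁰_Sk`: morphisms `n ⟶ m` are the `S`-equivariant maps
`S × Fin n → S × Fin m`. -/
instance (S : Type) [Monoid S] : Category (SkFree S) where
  Hom n m := {f : S × Fin n → S × Fin m // IsActHom S f}
  id n := ⟨fun p => p, fun _ _ => rfl⟩
  comp f g := ⟨fun p => g.1 (f.1 p), fun s p => by
    show g.1 (f.1 (s * p.1, p.2)) = _; rw [f.2 s p]; exact g.2 s (f.1 p)⟩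

/-- An automorphism of a category `C`: a functor `C ⥤ C` admitting a functor `ψ` with
`φ ⋙ ψ` and `ψ ⋙ φ` equal (not merely isomorphic) to the identity functor. -/
def IsCatAutomorphism {C : Type*} [Category C] (φ : C ⥤ C) : Prop :=
  ∃ ψ : C ⥤ C, φ ⋙ ψ = 𝟭 C ∧ ψ ⋙ φ = 𝟭 C

/-- An automorphism `φ` of the skeleton category `_S𝒜⁰_Sk` is *semi-inner with associated
monoid automorphism `σ`* if there is a family of bijections `s_{Fₙ} : Fₙ ≃ φ(Fₙ)` that are
`σ`-semilinear, i.e. `s_{Fₙ} (s • a) = σ s • s_{Fₙ} a`, and commute with all morphisms: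
`φ(f) ∘ s_{Fₙ} = s_{Fₘ} ∘ f`. -/
def SemiInnerWithSk (S : Type) [Monoid S] (φ : SkFree S ⥤ SkFree S) (σ : S ≃* S) : Prop :=
  ∃ e : ∀ n : SkFree S, (S × Fin n) ≃ (S × Fin (φ.obj n)),
    (∀ (n : SkFree S) (s : S) (p : S × Fin n),
        e n (s * p.1, p.2) = (σ s * (e n p).1, (e n p).2)) ∧
    ∀ {n m : SkFree S} (f : n ⟶ m) (p : S × Fin n), (φ.map f).1 (e n p) = e m (f.1 p)

/-- An automorphism of `_S𝒜⁰_Sk` is *semi-inner* if it is semi-inner with respect to some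
monoid automorphism of `S`. -/
def SemiInnerSk (S : Type) [Monoid S] (φ : SkFree S ⥤ SkFree S) : Prop :=
  ∃ σ : S ≃* S, SemiInnerWithSk S φ σ

section Aux

variable (S : Type) [Monoid S]

def ob (n : ℕ) : SkFree S := n

variable {S}

def z1 : Fin (ob S 1) := ⟨0, Nat.one_pos⟩

lemma fin1_eq (i : Fin (ob S 1)) : i = z1 := by
  have h : i.1 < 1 := i.isLt
  apply Fin.ext
  show i.1 = 0
  omega

/-- the morphism `F₁ → Fₙ` sending `(t,0)` to `t • a`. -/
def xhom {n : SkFree S} (a : S × Fin n) : ob S 1 ⟶ n :=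
  ⟨fun p => (p.1 * a.1, a.2), fun s p => by simp [mul_assoc]⟩

lemma comp_val {n m k : SkFree S} (f : n ⟶ m) (g : m ⟶ k) (p : S × Fin n) :
    (f ≫ g).1 p = g.1 (f.1 p) := rfl

lemma id_val {n : SkFree S} (p : S × Fin n) : (𝟙 n : n ⟶ n).1 p = p := rfl

lemma eval_mul {n m : SkFree S} (k : n ⟶ m) (t : S) (c : Fin n) :
    k.1 (t, c) = (t * (k.1 (1, c)).1, (k.1 (1, c)).2) := by
  have h := k.2 t (1, c)
  rwa [mul_one] at h

def evEquiv (n : SkFree S) : (ob S 1 ⟶ n) ≃ (S × Fin n) where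
  toFun f := f.1 (1, z1)
  invFun a := xhom a
  left_inv f := by
    apply Subtype.ext; funext p
    obtain ⟨s, i⟩ := p
    rw [fin1_eq i]
    show (s * (f.1 (1, z1)).1, (f.1 (1, z1)).2) = f.1 (s, z1)
    exact (eval_mul f s z1).symm
  right_inv a := by
    show (1 * a.1, a.2) = a
    rw [one_mul]

lemma xhom_comp {n m : SkFree S} (a : S × Fin n) (f : n ⟶ m) :
    xhom a ≫ f = xhom (f.1 a) := by
  apply Subtype.ext; funext p
  show f.1 (p.1 * a.1, a.2) = (p.1 * (f.1 a).1, (f.1 a).2)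
  have := f.2 p.1 a
  simpa using this

lemma xhom_act {n : SkFree S} (s : S) (a : S × Fin n) :
    xhom (s * a.1, a.2) = xhom (s, z1) ≫ xhom a := by
  apply Subtype.ext; funext p
  show (p.1 * (s * a.1), a.2) = ((p.1 * s) * a.1, a.2)
  rw [mul_assoc]

lemma retract_le {n m : SkFree S} (f : n ⟶ m) (g : m ⟶ n) (h : f ≫ g = 𝟙 n) :
    Nat.le n m := by
  have hinj : Function.Injective (fun i : Fin n => (f.1 (1, i)).2) := by
    intro i i' hii
    have key : ∀ j : Fin n, (1, j) = ((f.1 (1, j)).1 * (g.1 (1, (f.1 (1, j)).2)).1,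
        (g.1 (1, (f.1 (1, j)).2)).2) := by
      intro j
      have h1 : g.1 (f.1 (1, j)) = (1, j) := by
        have := congrArg Subtype.val h
        exact (congrFun this (1, j))
      exact h1.symm.trans (eval_mul g (f.1 (1, j)).1 (f.1 (1, j)).2)
    have ki := key i
    have ki' := key i'
    simp only at hii
    rw [hii] at ki
    have : i = (g.1 (1, (f.1 (1, i')).2)).2 := congrArg Prod.snd ki
    have h2 : i' = (g.1 (1, (f.1 (1, i')).2)).2 := congrArg Prod.snd ki'
    exact this.trans h2.symm
  have := Fin.le_of_injective _ hinj
  exact this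

end Aux

def un {S : Type} [Monoid S] (n : SkFree S) : ℕ := n

section Obj

variable {S : Type} [Monoid S] {φ ψ : SkFree S ⥤ SkFree S}
  (hφψ : φ ⋙ ψ = 𝟭 (SkFree S)) (hψφ : ψ ⋙ φ = 𝟭 (SkFree S))

include hφψ hψφ

lemma obj_zero : φ.obj (ob S 0) = ob S 0 := by
  have g0 : (ob S 0) ⟶ φ.obj (ob S 0) := ⟨fun p => p.2.elim0, fun s p => p.2.elim0⟩
  have hco := Functor.congr_obj hφψ (ob S 0)
  simp only [Functor.comp_obj, Functor.id_obj] at hco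
  have k : ψ.obj (ob S 0) ⟶ ob S 0 := ψ.map g0 ≫ eqToHom hco
  have hj : ψ.obj (ob S 0) = ob S 0 := by
    by_contra hne
    have hne' : un (ψ.obj (ob S 0)) ≠ 0 := fun h => hne h
    have hpos : 0 < un (ψ.obj (ob S 0)) := Nat.pos_of_ne_zero hne'
    exact (k.1 (1, ⟨0, hpos⟩)).2.elim0
  have h2 := Functor.congr_obj hψφ (ob S 0)
  simp only [Functor.comp_obj, Functor.id_obj] at h2
  rw [hj] at h2
  exact h2

lemma obj_one : φ.obj (ob S 1) = ob S 1 := by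
  have hφj := Functor.congr_obj hψφ (ob S 1)
  simp only [Functor.comp_obj, Functor.id_obj] at hφj
  have hz : φ.obj (ob S 0) = ob S 0 := obj_zero hφψ hψφ
  have hzψ : ψ.obj (ob S 0) = ob S 0 := obj_zero hψφ hφψ
  have hjne : un (ψ.obj (ob S 1)) ≠ 0 := by
    intro h0
    have h0' : ψ.obj (ob S 1) = ob S 0 := h0
    rw [h0', hz] at hφj
    have : (1 : ℕ) = 0 := congrArg un hφj.symm
    exact one_ne_zero this
  have hjpos : 0 < un (ψ.obj (ob S 1)) := Nat.pos_of_ne_zero hjne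
  let u : ob S 1 ⟶ ψ.obj (ob S 1) := ⟨fun p => (p.1, ⟨0, hjpos⟩), fun s p => rfl⟩
  let r : ψ.obj (ob S 1) ⟶ ob S 1 := ⟨fun p => (p.1, z1), fun s p => rfl⟩
  have hur : u ≫ r = 𝟙 (ob S 1) := by
    apply Subtype.ext; funext p
    obtain ⟨a, i⟩ := p
    show (a, z1) = (a, i)
    rw [fin1_eq i]
  have hF : (φ.map u ≫ eqToHom hφj) ≫ (eqToHom hφj.symm ≫ φ.map r) = 𝟙 (φ.obj (ob S 1)) := by
    rw [Category.assoc, ← Category.assoc (eqToHom hφj), eqToHom_trans, eqToHom_refl,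
      Category.id_comp, ← φ.map_comp, hur, φ.map_id]
  have hle : Nat.le (φ.obj (ob S 1)) (ob S 1) := retract_le _ _ hF
  have hne : un (φ.obj (ob S 1)) ≠ 0 := by
    intro h0
    have h0' : φ.obj (ob S 1) = ob S 0 := h0
    have e1 := Functor.congr_obj hφψ (ob S 1)
    simp only [Functor.comp_obj, Functor.id_obj] at e1
    rw [h0', hzψ] at e1
    have : (0 : ℕ) = 1 := congrArg un e1
    exact one_ne_zero this.symm
  have hle' : un (φ.obj (ob S 1)) ≤ 1 := hle
  have : un (φ.obj (ob S 1)) = 1 := by omega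
  exact this

lemma map_bijective (n m : SkFree S) :
    Function.Bijective (φ.map : (n ⟶ m) → (φ.obj n ⟶ φ.obj m)) := by
  constructor
  · intro f g hfg
    have hf := Functor.congr_hom hφψ f
    have hg := Functor.congr_hom hφψ g
    simp only [Functor.comp_map, Functor.id_map] at hf hg
    have h := hf.symm.trans ((congrArg ψ.map hfg).trans hg)
    have h2 := congrArg (fun k => eqToHom (Functor.congr_obj hφψ n).symm ≫ k ≫
      eqToHom (Functor.congr_obj hφψ m)) h
    simpa using h2
  · intro g
    refine ⟨eqToHom (Functor.congr_obj hφψ n).symm ≫ ψ.map g ≫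
      eqToHom (Functor.congr_obj hφψ m), ?_⟩
    have hg := Functor.congr_hom hψφ g
    simp only [Functor.comp_map, Functor.id_map] at hg
    rw [φ.map_comp, φ.map_comp, hg, eqToHom_map, eqToHom_map]
    simp

end Obj

section Main

variable {S : Type} [Monoid S] {φ ψ : SkFree S ⥤ SkFree S}
variable (hφψ : φ ⋙ ψ = 𝟭 (SkFree S)) (hψφ : ψ ⋙ φ = 𝟭 (SkFree S))

def θhom : ob S 1 ⟶ φ.obj (ob S 1) := eqToHom (obj_one hφψ hψφ).symm

def θhom' : φ.obj (ob S 1) ⟶ ob S 1 := eqToHom (obj_one hφψ hψφ)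

/-- the underlying map of the semilinear bijection. -/
def Efun (n : SkFree S) (a : S × Fin n) : S × Fin (φ.obj n) :=
  (θhom hφψ hψφ ≫ φ.map (xhom a)).1 (1, z1)

/-- the underlying map of the monoid automorphism. -/
def σfun (s : S) : S :=
  ((θhom hφψ hψφ ≫ φ.map (xhom (s, z1)) ≫ θhom' hφψ hψφ).1 (1, z1)).1

def fstEquiv : (S × Fin (ob S 1)) ≃ S where
  toFun := Prod.fst
  invFun s := (s, z1)
  left_inv p := by
    obtain ⟨a, i⟩ := p
    show (a, z1) = (a, i)
    rw [fin1_eq i]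
  right_inv s := rfl

def conjEquiv : (φ.obj (ob S 1) ⟶ φ.obj (ob S 1)) ≃ ((ob S 1 : SkFree S) ⟶ ob S 1) where
  toFun k := θhom hφψ hψφ ≫ k ≫ θhom' hφψ hψφ
  invFun k := θhom' hφψ hψφ ≫ k ≫ θhom hφψ hψφ
  left_inv k := by simp [θhom, θhom']
  right_inv k := by simp [θhom, θhom']

def precompEquiv (m : SkFree S) : (φ.obj (ob S 1) ⟶ m) ≃ ((ob S 1 : SkFree S) ⟶ m) where
  toFun k := θhom hφψ hψφ ≫ k
  invFun k := θhom' hφψ hψφ ≫ k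
  left_inv k := by simp [θhom, θhom']
  right_inv k := by simp [θhom, θhom']

noncomputable def mapEquiv (n m : SkFree S) : (n ⟶ m) ≃ (φ.obj n ⟶ φ.obj m) :=
  Equiv.ofBijective _ (map_bijective hφψ hψφ n m)

lemma Efun_bijective (n : SkFree S) : Function.Bijective (Efun hφψ hψφ n) := by
  have h : Efun hφψ hψφ n = ⇑((evEquiv n).symm.trans ((mapEquiv hφψ hψφ (ob S 1) n).trans
      ((precompEquiv hφψ hψφ (φ.obj n)).trans (evEquiv (φ.obj n))))) := rfl
  rw [h]
  exact Equiv.bijective _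

lemma σfun_bijective : Function.Bijective (σfun hφψ hψφ) := by
  have h : σfun hφψ hψφ = ⇑((fstEquiv (S := S)).symm.trans (((evEquiv (ob S 1)).symm.trans
      ((mapEquiv hφψ hψφ (ob S 1) (ob S 1)).trans ((conjEquiv hφψ hψφ).trans
      (evEquiv (ob S 1))))).trans fstEquiv)) := rfl
  rw [h]
  exact Equiv.bijective _

lemma ev_g_comp {m : SkFree S} (g : ob S 1 ⟶ ob S 1) (E : ob S 1 ⟶ m) :
    (g ≫ E).1 ((1 : S), z1) = ((g.1 (1, z1)).1 * (E.1 (1, z1)).1, (E.1 (1, z1)).2) := by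
  show E.1 (g.1 ((1 : S), z1)) = _
  rcases hgc : g.1 ((1 : S), z1) with ⟨a, c⟩
  rw [fin1_eq c]
  show E.1 (a, z1) = (a * (E.1 (1, z1)).1, (E.1 (1, z1)).2)
  exact eval_mul E a z1

lemma σfun_mul (s t : S) : σfun hφψ hψφ (s * t) = σfun hφψ hψφ s * σfun hφψ hψφ t := by
  unfold σfun
  have hx := xhom_act (S := S) s ((t, z1) : S × Fin (ob S 1))
  rw [hx, φ.map_comp]
  have hsplit : θhom hφψ hψφ ≫ (φ.map (xhom (s, z1)) ≫ φ.map (xhom (t, z1))) ≫ θhom' hφψ hψφ =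
      (θhom hφψ hψφ ≫ φ.map (xhom (s, z1)) ≫ θhom' hφψ hψφ) ≫
      (θhom hφψ hψφ ≫ φ.map (xhom (t, z1)) ≫ θhom' hφψ hψφ) := by
    simp [θhom, θhom']
  rw [hsplit, ev_g_comp]

lemma Efun_semilinear (n : SkFree S) (s : S) (p : S × Fin n) :
    Efun hφψ hψφ n (s * p.1, p.2)
      = (σfun hφψ hψφ s * (Efun hφψ hψφ n p).1, (Efun hφψ hψφ n p).2) := by
  unfold Efun σfun
  rw [xhom_act s p, φ.map_comp]
  have hsplit : θhom hφψ hψφ ≫ (φ.map (xhom (s, z1)) ≫ φ.map (xhom p)) =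
      (θhom hφψ hψφ ≫ φ.map (xhom (s, z1)) ≫ θhom' hφψ hψφ) ≫
      (θhom hφψ hψφ ≫ φ.map (xhom p)) := by
    simp [θhom, θhom']
  rw [hsplit, ev_g_comp]

lemma Efun_compat {n m : SkFree S} (f : n ⟶ m) (p : S × Fin n) :
    (φ.map f).1 (Efun hφψ hψφ n p) = Efun hφψ hψφ m (f.1 p) := by
  show (φ.map f).1 ((θhom hφψ hψφ ≫ φ.map (xhom p)).1 (1, z1))
      = (θhom hφψ hψφ ≫ φ.map (xhom (f.1 p))).1 (1, z1)
  rw [← xhom_comp p f, φ.map_comp]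
  rfl

end Main


/-- Every automorphism of the skeleton category `_S𝒜⁰_Sk` of finitely
generated free left `S`-acts is semi-inner. -/
theorem skeleton_automorphism_semiInner (S : Type) [Monoid S]
    (φ : SkFree S ⥤ SkFree S) (hφ : IsCatAutomorphism φ) :
    SemiInnerSk S φ := by
  obtain ⟨ψ, hφψ, hψφ⟩ := hφ
  refine ⟨⟨Equiv.ofBijective (σfun hφψ hψφ) (σfun_bijective hφψ hψφ),
    fun a b => σfun_mul hφψ hψφ a b⟩,
    fun n => Equiv.ofBijective (Efun hφψ hψφ n) (Efun_bijective hφψ hψφ n), ?_, ?_⟩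
  · intro n s p
    exact Efun_semilinear hφψ hψφ n s p
  · intro n m f p
    exact Efun_compat hφψ hψφ f p
end

section
/- For any monoid S, the group Out(_S𝒜⁰) = Aut(_S𝒜⁰)/Int(_S𝒜⁰) of outer automorphisms of the category _S𝒜⁰ of finitely generated free left S-acts is isomorphic to the group Out(S) = Aut(S)/Int(S) of outer automorphisms of the monoid S. -/
open CategoryTheory

/-- Objects of the category `_S𝒜⁰` of finitely generated free left `S`-acts:
the free `S`-act on a finite set `X`, with carrier `S × X`. -/
structure FreeAct (S : Type) [Monoid S] : Type 1 where
  X : Type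
  finX : Finite X

/-- The category `_S𝒜⁰`: morphisms are the `S`-equivariant maps. -/
instance (S : Type) [Monoid S] : Category (FreeAct S) where
  Hom A B := {f : S × A.X → S × B.X // IsActHom S f}
  id A := ⟨fun p => p, fun _ _ => rfl⟩
  comp f g := ⟨fun p => g.1 (f.1 p), fun s p => by
    show g.1 (f.1 (s * p.1, p.2)) = _; rw [f.2 s p]; exact g.2 s (f.1 p)⟩

/-- An automorphism of a category `C`: a functor `C ⥤ C` together with a strict
two-sided inverse functor. -/
structure CatAut (C : Type*) [Category C] where
  toFunctor : C ⥤ C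
  invFunctor : C ⥤ C
  comp_inv : toFunctor ⋙ invFunctor = 𝟭 C
  inv_comp : invFunctor ⋙ toFunctor = 𝟭 C

namespace CatAut

variable {C : Type*} [Category C]

@[ext] lemma ext {a b : CatAut C} (h1 : a.toFunctor = b.toFunctor)
    (h2 : a.invFunctor = b.invFunctor) : a = b := by
  cases a; cases b; simp_all

/-- The group of automorphisms of a category, under composition of functors. -/
instance : Group (CatAut C) where
  mul a b := ⟨a.toFunctor ⋙ b.toFunctor, b.invFunctor ⋙ a.invFunctor, by
      show a.toFunctor ⋙ (b.toFunctor ⋙ b.invFunctor) ⋙ a.invFunctor = 𝟭 C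
      rw [b.comp_inv, Functor.id_comp, a.comp_inv], by
      show b.invFunctor ⋙ (a.invFunctor ⋙ a.toFunctor) ⋙ b.toFunctor = 𝟭 C
      rw [a.inv_comp, Functor.id_comp, b.inv_comp]⟩
  one := ⟨𝟭 C, 𝟭 C, Functor.id_comp _, Functor.id_comp _⟩
  inv a := ⟨a.invFunctor, a.toFunctor, a.inv_comp, a.comp_inv⟩
  mul_assoc a b c := ext rfl rfl
  one_mul a := ext (Functor.id_comp _) (Functor.comp_id _)
  mul_one a := ext (Functor.comp_id _) (Functor.id_comp _)
  inv_mul_cancel a := ext a.inv_comp a.inv_comp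

lemma mul_toFunctor (a b : CatAut C) : (a * b).toFunctor = a.toFunctor ⋙ b.toFunctor := rfl
lemma inv_toFunctor (a : CatAut C) : (a⁻¹).toFunctor = a.invFunctor := rfl
lemma one_toFunctor : (1 : CatAut C).toFunctor = 𝟭 C := rfl

/-- The (normal) subgroup of inner automorphisms of a category: those automorphisms
that are naturally isomorphic to the identity functor. -/
def innerSubgroup (C : Type*) [Category C] : Subgroup (CatAut C) where
  carrier := {a | Nonempty (a.toFunctor ≅ 𝟭 C)}
  one_mem' := ⟨Iso.refl _⟩
  mul_mem' := by
    rintro a b ⟨ea⟩ ⟨eb⟩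
    exact ⟨Functor.isoWhiskerRight ea b.toFunctor ≪≫ b.toFunctor.leftUnitor ≪≫ eb⟩
  inv_mem' := by
    rintro a ⟨ea⟩
    exact ⟨a.invFunctor.rightUnitor.symm ≪≫ (Functor.isoWhiskerLeft a.invFunctor ea).symm ≪≫
      eqToIso a.inv_comp⟩

instance : (innerSubgroup C).Normal := by
  constructor
  rintro i ⟨e⟩ a
  refine ⟨?_⟩
  show ((a.toFunctor ⋙ i.toFunctor) ⋙ a.invFunctor) ≅ 𝟭 C
  exact (Functor.associator _ _ _) ≪≫ Functor.isoWhiskerLeft a.toFunctor (Functor.isoWhiskerRight e a.invFunctor)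
    ≪≫ Functor.isoWhiskerLeft a.toFunctor a.invFunctor.leftUnitor ≪≫ eqToIso a.comp_inv

end CatAut

/-- Conjugation by a unit, as a monoid automorphism of a monoid `S`. -/
def conjUnit (S : Type) [Monoid S] (u : Sˣ) : MulAut S where
  toFun s := u * s * ↑u⁻¹
  invFun s := ↑u⁻¹ * s * u
  left_inv s := by simp [mul_assoc]
  right_inv s := by simp [mul_assoc]
  map_mul' s t := by simp [mul_assoc]

/-- The group homomorphism `Sˣ →* MulAut S` given by conjugation. -/
def conjHom (S : Type) [Monoid S] : Sˣ →* MulAut S where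
  toFun := conjUnit S
  map_one' := by
    ext s; simp [conjUnit]
  map_mul' u v := by
    ext s; simp [conjUnit, mul_assoc]

/-- The subgroup of inner automorphisms of a monoid `S`: conjugations by units. -/
def innerMonSubgroup (S : Type) [Monoid S] : Subgroup (MulAut S) := (conjHom S).range

instance (S : Type) [Monoid S] : (innerMonSubgroup S).Normal := by
  constructor
  rintro i ⟨u, rfl⟩ σ
  refine ⟨Units.map σ.toMonoidHom u, ?_⟩
  ext s
  show σ.toMonoidHom u * s * ↑((Units.map σ.toMonoidHom) u)⁻¹ = σ ((conjUnit S u) (σ⁻¹ s))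
  rw [Units.coe_map_inv]
  simp only [conjUnit, MulEquiv.coe_mk, Equiv.coe_fn_mk, map_mul, MulEquiv.toMonoidHom_eq_coe,
    MonoidHom.coe_coe]
  rw [MulAut.apply_inv_self]

/-! ### Auxiliary development -/

namespace FreeActAux

variable {S : Type} [Monoid S]

lemma hom_ext {A B : FreeAct S} {f g : A ⟶ B} (h : ∀ p, f.1 p = g.1 p) : f = g :=
  Subtype.ext (funext h)

lemma comp_val {A B C : FreeAct S} (f : A ⟶ B) (g : B ⟶ C) (p : S × A.X) :
    (f ≫ g).1 p = g.1 (f.1 p) := rfl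

/-- The free act on one generator. -/
abbrev A1 (S : Type) [Monoid S] : FreeAct S := ⟨PUnit, inferInstance⟩

/-- The coprojection morphism corresponding to `x`. -/
def kappa (A : FreeAct S) (x : A.X) : A1 S ⟶ A := ⟨fun p => (p.1, x), fun _ _ => rfl⟩

/-- Right translation as an endomorphism of `A1`. -/
def lam (s : S) : A1 S ⟶ A1 S :=
  ⟨fun p => (p.1 * s, p.2), fun t p => by dsimp only; rw [mul_assoc]⟩

lemma apply_eq {A B : FreeAct S} (f : A ⟶ B) (t : S) (x : A.X) :
    f.1 (t, x) = (t * (f.1 (1, x)).1, (f.1 (1, x)).2) := by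
  have h := f.2 t (1, x)
  dsimp only at h
  rwa [mul_one] at h

lemma endo_rep (f : A1 S ⟶ A1 S) : f = lam ((f.1 (1, PUnit.unit)).1) := by
  apply hom_ext; intro p
  obtain ⟨t, u⟩ := p
  cases u
  show f.1 (t, PUnit.unit) = ((t * (f.1 (1, PUnit.unit)).1), PUnit.unit)
  rw [apply_eq f t PUnit.unit]

lemma lam_one : lam (1 : S) = 𝟙 (A1 S) := by
  apply hom_ext; intro p
  show (p.1 * 1, p.2) = p
  rw [mul_one]

lemma lam_mul (s t : S) : lam (s * t) = lam s ≫ lam t := by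
  apply hom_ext; intro p
  show (p.1 * (s * t), p.2) = ((p.1 * s) * t, p.2)
  rw [mul_assoc]

lemma lam_fst (s : S) : ((lam s).1 (1, PUnit.unit)).1 = s := one_mul s

lemma kappa_comp {A B : FreeAct S} (f : A ⟶ B) (x : A.X) :
    kappa A x ≫ f = lam ((f.1 (1, x)).1) ≫ kappa B ((f.1 (1, x)).2) := by
  apply hom_ext; intro p
  show f.1 (p.1, x) = (p.1 * (f.1 (1, x)).1, (f.1 (1, x)).2)
  exact apply_eq f p.1 x

lemma kappa_unit : kappa (A1 S) PUnit.unit = 𝟙 (A1 S) := by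
  apply hom_ext; intro p; rfl

/-- The "twist" functor attached to a monoid automorphism. -/
abbrev Psi (τ : MulAut S) : FreeAct S ⥤ FreeAct S where
  obj A := A
  map {A B} f := ⟨fun p => (τ (f.1 (τ⁻¹ p.1, p.2)).1, (f.1 (τ⁻¹ p.1, p.2)).2), by
    intro s p
    dsimp only
    have h1 : (τ⁻¹ : MulAut S) (s * p.1) = τ⁻¹ s * τ⁻¹ p.1 := map_mul τ⁻¹ s p.1
    rw [h1]
    have h2 := f.2 (τ⁻¹ s) (τ⁻¹ p.1, p.2)
    dsimp only at h2
    rw [h2]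
    dsimp only
    rw [map_mul τ, MulAut.apply_inv_self]⟩
  map_id A := by
    apply hom_ext; intro p
    show (τ (τ⁻¹ p.1), p.2) = p
    rw [MulAut.apply_inv_self]
  map_comp {A B C} f g := by
    apply hom_ext; intro p
    show (τ (g.1 (f.1 (τ⁻¹ p.1, p.2))).1, (g.1 (f.1 (τ⁻¹ p.1, p.2))).2)
        = (τ (g.1 (τ⁻¹ (τ (f.1 (τ⁻¹ p.1, p.2)).1), (f.1 (τ⁻¹ p.1, p.2)).2)).1,
           (g.1 (τ⁻¹ (τ (f.1 (τ⁻¹ p.1, p.2)).1), (f.1 (τ⁻¹ p.1, p.2)).2)).2)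
    rw [MulAut.inv_apply_self]

lemma Psi_map_val (τ : MulAut S) {A B : FreeAct S} (f : A ⟶ B) (p : S × A.X) :
    ((Psi τ).map f).1 p = (τ (f.1 (τ⁻¹ p.1, p.2)).1, (f.1 (τ⁻¹ p.1, p.2)).2) := rfl

lemma Psi_comp (a b : MulAut S) : Psi a ⋙ Psi b = Psi (b * a) := by
  refine CategoryTheory.Functor.ext (fun A => rfl) ?_
  intro A B f
  rw [eqToHom_refl, eqToHom_refl, Category.comp_id, Category.id_comp]
  apply hom_ext; intro p
  show (b ((a ((f.1 (a⁻¹ ((b⁻¹ : MulAut S) p.1), p.2)).1)) ), (f.1 (a⁻¹ ((b⁻¹ : MulAut S) p.1), p.2)).2)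
      = ((b * a) (f.1 ((b * a)⁻¹ p.1, p.2)).1, (f.1 ((b * a)⁻¹ p.1, p.2)).2)
  rw [mul_inv_rev, MulAut.mul_apply, MulAut.mul_apply]

lemma Psi_one : Psi (1 : MulAut S) = 𝟭 (FreeAct S) := by
  refine CategoryTheory.Functor.ext (fun A => rfl) ?_
  intro A B f
  rw [eqToHom_refl, eqToHom_refl, Category.comp_id, Category.id_comp]
  apply hom_ext; intro p
  show ((1 : MulAut S) (f.1 ((1 : MulAut S)⁻¹ p.1, p.2)).1, (f.1 ((1 : MulAut S)⁻¹ p.1, p.2)).2)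
      = f.1 p
  rw [inv_one, MulAut.one_apply, MulAut.one_apply]

/-- The monoid anti-twisted embedding of `MulAut S` into `CatAut (FreeAct S)`. -/
def Theta (S : Type) [Monoid S] : MulAut S →* CatAut (FreeAct S) where
  toFun τ := ⟨Psi τ⁻¹, Psi τ,
    by rw [Psi_comp, mul_inv_cancel, Psi_one],
    by rw [Psi_comp, inv_mul_cancel, Psi_one]⟩
  map_one' := CatAut.ext
    (by show Psi (1 : MulAut S)⁻¹ = 𝟭 (FreeAct S); rw [inv_one, Psi_one])
    (by show Psi (1 : MulAut S) = 𝟭 (FreeAct S); rw [Psi_one])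
  map_mul' ρ τ := CatAut.ext
    (by show Psi (ρ * τ)⁻¹ = Psi ρ⁻¹ ⋙ Psi τ⁻¹; rw [Psi_comp, mul_inv_rev])
    (by show Psi (ρ * τ) = Psi τ ⋙ Psi ρ; rw [Psi_comp])

lemma Theta_toFunctor (τ : MulAut S) : (Theta S τ).toFunctor = Psi τ⁻¹ := rfl
lemma Theta_invFunctor (τ : MulAut S) : (Theta S τ).invFunctor = Psi τ := rfl

lemma conjUnit_apply (u : Sˣ) (s : S) : conjUnit S u s = ↑u * s * ↑u⁻¹ := rfl

lemma conjUnit_inv_apply (u : Sˣ) (s : S) : (conjUnit S u)⁻¹ s = ↑u⁻¹ * s * ↑u := by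
  have h : conjUnit S u (↑u⁻¹ * s * ↑u) = s := by
    rw [conjUnit_apply]
    calc (u : S) * (↑u⁻¹ * s * ↑u) * ↑u⁻¹ = (↑u * ↑u⁻¹) * s * (↑u * ↑u⁻¹) := by
          simp only [mul_assoc]
      _ = s := by rw [Units.mul_inv]; rw [one_mul, mul_one]
  conv_lhs => rw [← h]
  rw [MulAut.inv_apply_self]

/-- If `τ` is conjugation by a unit then `Psi τ` is isomorphic to the identity. -/
lemma psi_conj_iso (u : Sˣ) : Nonempty (Psi (conjUnit S u) ≅ 𝟭 (FreeAct S)) := by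
  refine ⟨NatIso.ofComponents (fun A =>
    { hom := ⟨fun p => (p.1 * ↑u, p.2), fun s p => by dsimp only; rw [mul_assoc]⟩
      inv := ⟨fun p => (p.1 * ↑u⁻¹, p.2), fun s p => by dsimp only; rw [mul_assoc]⟩
      hom_inv_id := hom_ext fun p => by
        show (p.1 * ↑u * ↑u⁻¹, p.2) = p
        rw [mul_assoc, Units.mul_inv, mul_one]
      inv_hom_id := hom_ext fun p => by
        show (p.1 * ↑u⁻¹ * ↑u, p.2) = p
        rw [mul_assoc, Units.inv_mul, mul_one] }) ?_⟩
  intro A B f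
  apply hom_ext; intro p
  show ((conjUnit S u) (f.1 ((conjUnit S u)⁻¹ p.1, p.2)).1 * ↑u,
        (f.1 ((conjUnit S u)⁻¹ p.1, p.2)).2) = f.1 (p.1 * ↑u, p.2)
  rw [conjUnit_inv_apply, apply_eq f (↑u⁻¹ * p.1 * ↑u) p.2, apply_eq f (p.1 * ↑u) p.2]
  dsimp only
  rw [conjUnit_apply]
  simp [mul_assoc]

/-- If `Psi τ` is isomorphic to the identity then `τ` is inner. -/
lemma iso_to_inner (τ : MulAut S) (hiso : Nonempty (Psi τ ≅ 𝟭 (FreeAct S))) :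
    τ ∈ innerMonSubgroup S := by
  obtain ⟨e⟩ := hiso
  let h : A1 S ⟶ A1 S := e.hom.app (A1 S)
  let k : A1 S ⟶ A1 S := e.inv.app (A1 S)
  let a : S := (h.1 (1, PUnit.unit)).1
  let b : S := (k.1 (1, PUnit.unit)).1
  have hval : ∀ t : S, h.1 (t, PUnit.unit) = (t * a, PUnit.unit) := by
    intro t
    have := congrArg (fun m => m.1 (t, PUnit.unit)) (endo_rep h)
    dsimp only at this
    exact this
  have kval : ∀ t : S, k.1 (t, PUnit.unit) = (t * b, PUnit.unit) := by
    intro t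
    have := congrArg (fun m => m.1 (t, PUnit.unit)) (endo_rep k)
    dsimp only at this
    exact this
  have hk : h ≫ k = 𝟙 (A1 S) := e.hom_inv_id_app (A1 S)
  have kh : k ≫ h = 𝟙 (A1 S) := e.inv_hom_id_app (A1 S)
  have hab : a * b = 1 := by
    have := congrArg (fun m => m.1 (1, PUnit.unit)) hk
    dsimp only [comp_val] at this
    rw [hval 1, kval (1 * a)] at this
    have h1 : 1 * a * b = 1 := congrArg Prod.fst this
    rwa [one_mul] at h1
  have hba : b * a = 1 := by
    have := congrArg (fun m => m.1 (1, PUnit.unit)) kh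
    dsimp only [comp_val] at this
    rw [kval 1, hval (1 * b)] at this
    have h1 : 1 * b * a = 1 := congrArg Prod.fst this
    rwa [one_mul] at h1
  have key : ∀ c : S, τ c * a = a * c := by
    intro c
    have hnat := e.hom.naturality (lam c)
    have hev := congrArg (fun m => m.1 (1, PUnit.unit)) hnat
    dsimp only [comp_val, Functor.id_map] at hev
    -- LHS : h.1 (((Psi τ).map (lam c)).1 (1,⋆)), RHS : (lam c).1 (h.1 (1,⋆))
    have e1 : (lam c).1 ((τ⁻¹ : MulAut S) 1, PUnit.unit) = (τ⁻¹ (1:S) * c, PUnit.unit) := rfl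
    rw [e1, map_one, one_mul] at hev
    rw [hval (τ c)] at hev
    have e2 : (lam c).1 (h.1 (1, PUnit.unit)) = ((h.1 (1, PUnit.unit)).1 * c, PUnit.unit) := rfl
    rw [e2] at hev
    exact congrArg Prod.fst hev
  have htau : ∀ c : S, τ c = a * c * b := by
    intro c
    calc τ c = τ c * (a * b) := by rw [hab, mul_one]
      _ = (τ c * a) * b := by rw [mul_assoc]
      _ = (a * c) * b := by rw [key c]
  refine ⟨⟨a, b, hab, hba⟩, ?_⟩
  apply MulEquiv.ext
  intro c
  show a * c * b = τ c
  rw [htau c]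

section Strict

variable (F G : FreeAct S ⥤ FreeAct S)

lemma map_bijective (hGF : F ⋙ G = 𝟭 (FreeAct S)) (hFG : G ⋙ F = 𝟭 (FreeAct S))
    {A B : FreeAct S} : Function.Bijective (fun f : A ⟶ B => F.map f) := by
  constructor
  · intro f g h
    have hf := Functor.congr_hom hGF f
    have hg := Functor.congr_hom hGF g
    simp only [Functor.comp_map, Functor.id_map] at hf hg
    have : eqToHom (Functor.congr_obj hGF A) ≫ f ≫ eqToHom (Functor.congr_obj hGF B).symm
        = eqToHom (Functor.congr_obj hGF A) ≫ g ≫ eqToHom (Functor.congr_obj hGF B).symm := by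
      rw [← hf, ← hg]
      dsimp only at h ⊢
      rw [h]
    rwa [cancel_epi, cancel_mono] at this
  · intro g
    refine ⟨eqToHom (Functor.congr_obj hGF A).symm ≫ G.map g ≫
      eqToHom (Functor.congr_obj hGF B), ?_⟩
    have hg := Functor.congr_hom hFG g
    simp only [Functor.comp_map, Functor.id_map] at hg
    dsimp only
    rw [F.map_comp, F.map_comp, hg, eqToHom_map, eqToHom_map]
    simp only [Category.assoc, eqToHom_trans, eqToHom_refl, Category.comp_id, Category.id_comp]
    rw [← Category.assoc, eqToHom_trans, eqToHom_refl, Category.id_comp]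

lemma FA1_nonempty (hGF : F ⋙ G = 𝟭 (FreeAct S)) (hFG : G ⋙ F = 𝟭 (FreeAct S)) :
    Nonempty (F.obj (A1 S)).X := by
  by_contra hne
  rw [not_nonempty_iff] at hne
  obtain ⟨f, -⟩ := (map_bijective F G hGF hFG (A := A1 S) (B := F.obj (A1 S))).2
    ⟨fun p => (hne.false p.2).elim, fun s p => (hne.false p.2).elim⟩
  exact hne.false (f.1 (1, PUnit.unit)).2

/-- Elementary formulation of a binary coproduct cocone. -/
def IsCopr {C₁ C₂ E : FreeAct S} (i₁ : C₁ ⟶ E) (i₂ : C₂ ⟶ E) : Prop :=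
  ∀ (T : FreeAct S) (g₁ : C₁ ⟶ T) (g₂ : C₂ ⟶ T),
    ∃! k : E ⟶ T, i₁ ≫ k = g₁ ∧ i₂ ≫ k = g₂

lemma isCopr_map (hGF : F ⋙ G = 𝟭 (FreeAct S)) (hFG : G ⋙ F = 𝟭 (FreeAct S))
    {C₁ C₂ E : FreeAct S} {i₁ : C₁ ⟶ E} {i₂ : C₂ ⟶ E} (h : IsCopr i₁ i₂) :
    IsCopr (F.map i₁) (F.map i₂) := by
  intro T g₁ g₂
  obtain ⟨g₁', hg₁⟩ := (map_bijective F G hGF hFG).2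
    (g₁ ≫ eqToHom (Functor.congr_obj hFG T).symm)
  obtain ⟨g₂', hg₂⟩ := (map_bijective F G hGF hFG).2
    (g₂ ≫ eqToHom (Functor.congr_obj hFG T).symm)
  dsimp only at hg₁ hg₂
  obtain ⟨k, ⟨hk₁, hk₂⟩, huniq⟩ := h (G.obj T) g₁' g₂'
  refine ⟨F.map k ≫ eqToHom (Functor.congr_obj hFG T), ⟨?_, ?_⟩, ?_⟩
  · rw [← Category.assoc, ← F.map_comp, hk₁, hg₁, Category.assoc, eqToHom_trans,
      eqToHom_refl, Category.comp_id]
  · rw [← Category.assoc, ← F.map_comp, hk₂, hg₂, Category.assoc, eqToHom_trans,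
      eqToHom_refl, Category.comp_id]
  · rintro k₂ ⟨hk₂₁, hk₂₂⟩
    obtain ⟨k₂', hk₂'⟩ := (map_bijective F G hGF hFG).2
      (k₂ ≫ eqToHom (Functor.congr_obj hFG T).symm)
    dsimp only at hk₂'
    have hik₁ : i₁ ≫ k₂' = g₁' := by
      apply (map_bijective F G hGF hFG).1
      dsimp only
      rw [F.map_comp, hk₂', hg₁, ← Category.assoc, hk₂₁]
    have hik₂ : i₂ ≫ k₂' = g₂' := by
      apply (map_bijective F G hGF hFG).1
      dsimp only
      rw [F.map_comp, hk₂', hg₂, ← Category.assoc, hk₂₂]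
    have hkk : k₂' = k := huniq k₂' ⟨hik₁, hik₂⟩
    rw [← hkk, hk₂', Category.assoc, eqToHom_trans, eqToHom_refl, Category.comp_id]

/-- The concrete coproduct object. -/
def copr (C₁ C₂ : FreeAct S) : FreeAct S :=
  ⟨C₁.X ⊕ C₂.X, by have := C₁.finX; have := C₂.finX; exact inferInstance⟩

def coprInl (C₁ C₂ : FreeAct S) : C₁ ⟶ copr C₁ C₂ :=
  ⟨fun p => (p.1, Sum.inl p.2), fun _ _ => rfl⟩

def coprInr (C₁ C₂ : FreeAct S) : C₂ ⟶ copr C₁ C₂ :=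
  ⟨fun p => (p.1, Sum.inr p.2), fun _ _ => rfl⟩

lemma isCopr_copr (C₁ C₂ : FreeAct S) : IsCopr (coprInl C₁ C₂) (coprInr C₁ C₂) := by
  intro T g₁ g₂
  refine ⟨⟨fun p => Sum.elim (fun y => g₁.1 (p.1, y)) (fun z => g₂.1 (p.1, z)) p.2, ?_⟩,
    ⟨hom_ext fun p => rfl, hom_ext fun p => rfl⟩, ?_⟩
  · intro s p
    obtain ⟨t, w⟩ := p
    cases w with
    | inl y => exact g₁.2 s (t, y)
    | inr z => exact g₂.2 s (t, z)
  · rintro k ⟨h1, h2⟩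
    apply hom_ext
    rintro ⟨t, w⟩
    cases w with
    | inl y => exact congrArg (fun m => m.1 (t, y)) h1
    | inr z => exact congrArg (fun m => m.1 (t, z)) h2

lemma A1_connected {C₁ C₂ E : FreeAct S} {i₁ : C₁ ⟶ E} {i₂ : C₂ ⟶ E} (h : IsCopr i₁ i₂)
    (f : A1 S ⟶ E) :
    (∃ m : A1 S ⟶ C₁, f = m ≫ i₁) ∨ (∃ m : A1 S ⟶ C₂, f = m ≫ i₂) := by
  obtain ⟨v, ⟨hv1, hv2⟩, -⟩ := isCopr_copr C₁ C₂ E i₁ i₂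
  obtain ⟨u, ⟨hu1, hu2⟩, -⟩ := h (copr C₁ C₂) (coprInl C₁ C₂) (coprInr C₁ C₂)
  have huv : u ≫ v = 𝟙 E := by
    obtain ⟨k, -, hkuniq⟩ := h E i₁ i₂
    have h1 := hkuniq (u ≫ v) ⟨by rw [← Category.assoc, hu1, hv1],
      by rw [← Category.assoc, hu2, hv2]⟩
    have h2 := hkuniq (𝟙 E) ⟨Category.comp_id _, Category.comp_id _⟩
    rw [h1, h2]
  have hfu : f ≫ u = lam (((f ≫ u).1 (1, PUnit.unit)).1) ≫
      kappa (copr C₁ C₂) (((f ≫ u).1 (1, PUnit.unit)).2) := by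
    conv_lhs => rw [← Category.id_comp (f ≫ u), ← kappa_unit, kappa_comp (f ≫ u) PUnit.unit]
  have hf : f = (f ≫ u) ≫ v := by rw [Category.assoc, huv, Category.comp_id]
  have key : f = lam (((f ≫ u).1 (1, PUnit.unit)).1) ≫
      (kappa (copr C₁ C₂) (((f ≫ u).1 (1, PUnit.unit)).2) ≫ v) := by
    conv_lhs => rw [hf, hfu]
    rw [Category.assoc]
  generalize ((f ≫ u).1 (1, PUnit.unit)).1 = a at key
  generalize ((f ≫ u).1 (1, PUnit.unit)).2 = zz at key
  rcases zz with y | z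
  · left
    refine ⟨lam a ≫ kappa C₁ y, ?_⟩
    have h3 : kappa (copr C₁ C₂) (Sum.inl y) ≫ v = kappa C₁ y ≫ i₁ := by
      rw [show kappa (copr C₁ C₂) (Sum.inl y) = kappa C₁ y ≫ coprInl C₁ C₂ from
        hom_ext fun p => rfl, Category.assoc, hv1]
    rw [key, h3, Category.assoc]
  · right
    refine ⟨lam a ≫ kappa C₂ z, ?_⟩
    have h3 : kappa (copr C₁ C₂) (Sum.inr z) ≫ v = kappa C₂ z ≫ i₂ := by
      rw [show kappa (copr C₁ C₂) (Sum.inr z) = kappa C₂ z ≫ coprInr C₁ C₂ from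
        hom_ext fun p => rfl, Category.assoc, hv2]
    rw [key, h3, Category.assoc]

lemma FA1_subsingleton (hGF : F ⋙ G = 𝟭 (FreeAct S)) (hFG : G ⋙ F = 𝟭 (FreeAct S))
    (w₁ w₂ : (F.obj (A1 S)).X) : w₁ = w₂ := by
  classical
  by_contra hne
  have hc : IsCopr (G.map (coprInl (F.obj (A1 S)) (F.obj (A1 S)))) (G.map (coprInr (F.obj (A1 S)) (F.obj (A1 S)))) :=
    isCopr_map G F hFG hGF (isCopr_copr (F.obj (A1 S)) (F.obj (A1 S)))
  have hA : G.obj (F.obj (A1 S)) = A1 S := Functor.congr_obj hGF (A1 S)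
  let hmor : F.obj (A1 S) ⟶ copr (F.obj (A1 S)) (F.obj (A1 S)) :=
    ⟨fun p => (p.1, if p.2 = w₁ then Sum.inl p.2 else Sum.inr p.2), fun s p => rfl⟩
  rcases A1_connected hc (eqToHom hA.symm ≫ G.map hmor) with ⟨m, hm⟩ | ⟨m, hm⟩
  · obtain ⟨x, hx⟩ := (map_bijective G F hFG hGF).2 (eqToHom hA ≫ m)
    dsimp only at hx
    have : x ≫ coprInl (F.obj (A1 S)) (F.obj (A1 S)) = hmor := by
      apply (map_bijective G F hFG hGF).1
      dsimp only
      rw [G.map_comp, hx, Category.assoc, ← hm, ← Category.assoc, eqToHom_trans,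
        eqToHom_refl, Category.id_comp]
    have hev := congrArg (fun m => (m.1 (1, w₂)).2) this
    dsimp only [comp_val, hmor, coprInl] at hev
    replace hev := hev.trans (if_neg (Ne.symm hne))
    exact Sum.inl_ne_inr hev
  · obtain ⟨x, hx⟩ := (map_bijective G F hFG hGF).2 (eqToHom hA ≫ m)
    dsimp only at hx
    have : x ≫ coprInr (F.obj (A1 S)) (F.obj (A1 S)) = hmor := by
      apply (map_bijective G F hFG hGF).1
      dsimp only
      rw [G.map_comp, hx, Category.assoc, ← hm, ← Category.assoc, eqToHom_trans,
        eqToHom_refl, Category.id_comp]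
    have hev := congrArg (fun m => (m.1 (1, w₁)).2) this
    dsimp only [comp_val, hmor, coprInr] at hev
    replace hev := hev.trans (if_pos rfl)
    exact Sum.inr_ne_inl hev

lemma exists_psi_iso (hGF : F ⋙ G = 𝟭 (FreeAct S)) (hFG : G ⋙ F = 𝟭 (FreeAct S)) :
    ∃ σ : MulAut S, Nonempty (Psi σ ≅ F) := by
  classical
  obtain ⟨w₀⟩ := FA1_nonempty F G hGF hFG
  have hsub : ∀ w₁ w₂ : (F.obj (A1 S)).X, w₁ = w₂ := FA1_subsingleton F G hGF hFG
  -- an isomorphism between `F.obj (A1 S)` and `A1 S`, given by opaque morphisms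
  obtain ⟨ihom, iinv, h1, h2⟩ : ∃ (h : F.obj (A1 S) ⟶ A1 S) (i : A1 S ⟶ F.obj (A1 S)),
      h ≫ i = 𝟙 (F.obj (A1 S)) ∧ i ≫ h = 𝟙 (A1 S) := by
    refine ⟨⟨fun p => (p.1, PUnit.unit), fun _ _ => rfl⟩,
      ⟨fun p => (p.1, w₀), fun _ _ => rfl⟩, hom_ext fun p => ?_, hom_ext fun p => rfl⟩
    show (p.1, w₀) = p
    exact Prod.ext rfl (hsub w₀ p.2)
  haveI hIhom : IsIso ihom := ⟨⟨iinv, h1, h2⟩⟩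
  haveI hIinv : IsIso iinv := ⟨⟨ihom, h2, h1⟩⟩
  have hc1 : ∀ {D : FreeAct S} (g : F.obj (A1 S) ⟶ D), ihom ≫ iinv ≫ g = g := by
    intro D g; rw [← Category.assoc, h1, Category.id_comp]
  have hc2 : ∀ {D : FreeAct S} (g : A1 S ⟶ D), iinv ≫ ihom ≫ g = g := by
    intro D g; rw [← Category.assoc, h2, Category.id_comp]
  have hc3 : ∀ {D : FreeAct S} (g : D ⟶ F.obj (A1 S)), g ≫ ihom ≫ iinv = g := by
    intro D g; rw [h1, Category.comp_id]
  have hc4 : ∀ {D : FreeAct S} (g : D ⟶ A1 S), g ≫ iinv ≫ ihom = g := by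
    intro D g; rw [h2, Category.comp_id]
  -- the monoid automorphism
  let sig0 : S → S := fun s => (((iinv ≫ F.map (lam s)) ≫ ihom).1 (1, PUnit.unit)).1
  have hrep : ∀ s : S, (iinv ≫ F.map (lam s)) ≫ ihom = lam (sig0 s) :=
    fun s => endo_rep _
  have hmul : ∀ s t : S, sig0 (s * t) = sig0 s * sig0 t := by
    intro s t
    have h1' : (iinv ≫ F.map (lam (s * t))) ≫ ihom = lam (sig0 s * sig0 t) := by
      rw [lam_mul (sig0 s), ← hrep s, ← hrep t, lam_mul, F.map_comp]
      simp only [Category.assoc]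
      rw [hc1]
    have := congrArg (fun m => ((m).1 (1, PUnit.unit)).1) h1'
    dsimp only at this
    rw [lam_fst] at this
    exact this
  have hbij : Function.Bijective sig0 := by
    constructor
    · intro s t hst
      have h1' : (iinv ≫ F.map (lam s)) ≫ ihom = (iinv ≫ F.map (lam t)) ≫ ihom := by
        rw [hrep s, hrep t, hst]
      rw [cancel_mono, cancel_epi] at h1'
      have h2' : lam s = lam t := (map_bijective F G hGF hFG).1 h1'
      have h3 := congrArg (fun m => (m.1 (1, PUnit.unit)).1) h2'
      dsimp only at h3
      rwa [lam_fst, lam_fst] at h3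
    · intro t
      obtain ⟨f, hf⟩ := (map_bijective F G hGF hFG).2 (ihom ≫ lam t ≫ iinv)
      dsimp only at hf
      refine ⟨(f.1 (1, PUnit.unit)).1, ?_⟩
      have h1' : (iinv ≫ F.map f) ≫ ihom = lam t := by
        rw [hf]
        simp only [Category.assoc]
        rw [hc2, hc4]
      have h2' := hrep ((f.1 (1, PUnit.unit)).1)
      rw [← endo_rep f] at h2'
      have h3 := congrArg (fun m => (m.1 (1, PUnit.unit)).1) (h2'.symm.trans h1')
      dsimp only at h3
      rwa [lam_fst, lam_fst] at h3
  let σ : MulAut S := { Equiv.ofBijective sig0 hbij with map_mul' := hmul }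
  have hσ : ∀ s : S, σ s = sig0 s := fun _ => rfl
  have hcomm : ∀ s : S, iinv ≫ F.map (lam s) = lam (σ s) ≫ iinv := by
    intro s
    rw [hσ, ← hrep s, Category.assoc, Category.assoc, hc3]
  -- components of the natural isomorphism
  let c : ∀ (A : FreeAct S), A.X → (A1 S ⟶ F.obj A) := fun A x => iinv ≫ F.map (kappa A x)
  let η : ∀ A : FreeAct S, A ⟶ F.obj A := fun A =>
    ⟨fun p => (c A p.2).1 (p.1, PUnit.unit), fun s p => (c A p.2).2 s (p.1, PUnit.unit)⟩
  have hkey : ∀ {A B : FreeAct S} (f : A ⟶ B) (x : A.X),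
      c A x ≫ F.map f = lam (σ ((f.1 (1, x)).1)) ≫ c B ((f.1 (1, x)).2) := by
    intro A B f x
    show (iinv ≫ F.map (kappa A x)) ≫ F.map f
        = lam (σ ((f.1 (1, x)).1)) ≫ iinv ≫ F.map (kappa B ((f.1 (1, x)).2))
    rw [Category.assoc, ← F.map_comp, kappa_comp f x, F.map_comp, ← Category.assoc,
      hcomm ((f.1 (1, x)).1), Category.assoc]
  have hnat : ∀ {A B : FreeAct S} (f : A ⟶ B), (Psi σ).map f ≫ η B = η A ≫ F.map f := by
    intro A B f
    apply hom_ext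
    rintro ⟨s, x⟩
    have hPsi : ((Psi σ).map f).1 (s, x) = (s * σ ((f.1 (1, x)).1), (f.1 (1, x)).2) := by
      rw [Psi_map_val]
      show (σ (f.1 (σ⁻¹ s, x)).1, (f.1 (σ⁻¹ s, x)).2) = _
      rw [apply_eq f (σ⁻¹ s) x]
      show (σ ((σ⁻¹ : MulAut S) s * (f.1 (1, x)).1), (f.1 (1, x)).2) = _
      rw [map_mul σ, MulAut.apply_inv_self]
    calc ((Psi σ).map f ≫ η B).1 (s, x)
        = (η B).1 (s * σ ((f.1 (1, x)).1), (f.1 (1, x)).2) := by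
          rw [comp_val, hPsi]
      _ = ((lam (σ ((f.1 (1, x)).1)) ≫ c B ((f.1 (1, x)).2)).1 (s, PUnit.unit)) := rfl
      _ = ((c A x ≫ F.map f).1 (s, PUnit.unit)) := by rw [hkey f x]
      _ = (η A ≫ F.map f).1 (s, x) := rfl
  -- bijectivity of the components
  have hubij : ∀ D : FreeAct S,
      Function.Bijective (fun g : A1 S ⟶ D => g.1 (1, PUnit.unit)) := by
    intro D
    constructor
    · intro g₁ g₂ hg
      apply hom_ext
      rintro ⟨t, u⟩
      cases u
      show g₁.1 (t, PUnit.unit) = g₂.1 (t, PUnit.unit)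
      rw [apply_eq g₁ t PUnit.unit, apply_eq g₂ t PUnit.unit]
      dsimp only at hg
      rw [hg]
    · rintro ⟨t, x⟩
      refine ⟨⟨fun p => (p.1 * t, x), fun s p => by dsimp only; rw [mul_assoc]⟩, ?_⟩
      show (1 * t, x) = (t, x)
      rw [one_mul]
  have hwbij : ∀ D : FreeAct S,
      Function.Bijective (fun q : S × D.X => lam q.1 ≫ kappa D q.2) := by
    intro D
    rw [Function.bijective_iff_has_inverse]
    refine ⟨fun g => g.1 (1, PUnit.unit), ?_, ?_⟩
    · rintro ⟨t, x⟩
      show ((lam t ≫ kappa D x).1 (1, PUnit.unit)) = (t, x)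
      show (1 * t, x) = (t, x)
      rw [one_mul]
    · intro g
      show lam ((g.1 (1, PUnit.unit)).1) ≫ kappa D ((g.1 (1, PUnit.unit)).2) = g
      rw [← kappa_comp g PUnit.unit, kappa_unit, Category.id_comp]
  have hΓbij : ∀ A : FreeAct S,
      Function.Bijective (fun g : A1 S ⟶ A => iinv ≫ F.map g) := by
    intro A
    constructor
    · intro g₁ g₂ hg
      dsimp only at hg
      rw [cancel_epi] at hg
      exact (map_bijective F G hGF hFG).1 hg
    · intro g'
      obtain ⟨g, hg⟩ := (map_bijective F G hGF hFG).2 (ihom ≫ g')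
      dsimp only at hg
      refine ⟨g, ?_⟩
      show iinv ≫ F.map g = g'
      rw [hg, ← Category.assoc, h2, Category.id_comp]
  have hηbij : ∀ A : FreeAct S, Function.Bijective (η A).1 := by
    intro A
    have htinv : Function.Bijective (fun q : S × A.X => ((σ⁻¹ : MulAut S) q.1, q.2)) := by
      constructor
      · rintro ⟨s, x⟩ ⟨t, y⟩ hq
        have ha : (σ⁻¹ : MulAut S) s = σ⁻¹ t := congrArg Prod.fst hq
        have hb : x = y := congrArg Prod.snd hq
        have hc' := (σ⁻¹ : MulAut S).injective ha
        rw [hc', hb]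
      · rintro ⟨s, x⟩
        refine ⟨(σ s, x), ?_⟩
        show ((σ⁻¹ : MulAut S) (σ s), x) = (s, x)
        rw [MulAut.inv_apply_self]
    have hmor : ∀ (t : S) (x : A.X),
        iinv ≫ F.map (lam t ≫ kappa A x) = lam (σ t) ≫ c A x := by
      intro t x
      show iinv ≫ F.map (lam t ≫ kappa A x) = lam (σ t) ≫ iinv ≫ F.map (kappa A x)
      rw [F.map_comp, ← Category.assoc, hcomm t, Category.assoc]
    have hηeq : (η A).1 = (fun g : A1 S ⟶ F.obj A => g.1 (1, PUnit.unit)) ∘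
        ((fun g : A1 S ⟶ A => iinv ≫ F.map g) ∘
         ((fun q : S × A.X => lam q.1 ≫ kappa A q.2) ∘
          (fun q : S × A.X => ((σ⁻¹ : MulAut S) q.1, q.2)))) := by
      funext q
      obtain ⟨s, x⟩ := q
      show (c A x).1 (s, PUnit.unit)
          = (iinv ≫ F.map (lam ((σ⁻¹ : MulAut S) s) ≫ kappa A x)).1 (1, PUnit.unit)
      rw [hmor ((σ⁻¹ : MulAut S) s) x]
      show (c A x).1 (s, PUnit.unit) = (c A x).1 (1 * σ ((σ⁻¹ : MulAut S) s), PUnit.unit)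
      rw [one_mul, MulAut.apply_inv_self]
    rw [hηeq]
    exact (hubij (F.obj A)).comp ((hΓbij A).comp ((hwbij A).comp htinv))
  -- assemble the natural isomorphism
  have hηiso : ∀ A : FreeAct S, ∃ θ : A ≅ F.obj A, θ.hom = η A := by
    intro A
    obtain ⟨gv, hg1, hg2⟩ := Function.bijective_iff_has_inverse.1 (hηbij A)
    refine ⟨Iso.mk (η A) ⟨gv, ?_⟩ (hom_ext fun p => hg1 p) (hom_ext fun q => hg2 q), rfl⟩
    intro s q
    apply (hηbij A).1
    rw [hg2, (η A).2 s (gv q), hg2]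
  refine ⟨σ, ⟨NatIso.ofComponents (fun A => (hηiso A).choose) ?_⟩⟩
  intro A B f
  rw [(hηiso A).choose_spec, (hηiso B).choose_spec]
  exact hnat f

end Strict

end FreeActAux


open FreeActAux

/-- **Theorem 10.** For any monoid `S`, the group
`Out(_S𝒜⁰) = Aut(_S𝒜⁰)/Int(_S𝒜⁰)` of outer automorphisms of the category `_S𝒜⁰` of
finitely generated free left `S`-acts is isomorphic to the group `Out(S) = Aut(S)/Int(S)`
of outer automorphisms of the monoid `S`. -/
theorem out_category_iso_out_monoid (S : Type) [Monoid S] :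
    Nonempty ((CatAut (FreeAct S) ⧸ CatAut.innerSubgroup (FreeAct S)) ≃*
      (MulAut S ⧸ innerMonSubgroup S)) := by
  -- the homomorphism `Theta` sends inner automorphisms to inner automorphisms
  have hmem1 : ∀ τ : MulAut S, τ ∈ innerMonSubgroup S →
      Theta S τ ∈ CatAut.innerSubgroup (FreeAct S) := by
    intro τ hτ
    obtain ⟨u, hu⟩ := hτ
    have hinv : τ⁻¹ = conjUnit S u⁻¹ := by
      rw [← hu, ← map_inv (conjHom S) u]; rfl
    show Nonempty ((Theta S τ).toFunctor ≅ 𝟭 (FreeAct S))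
    rw [Theta_toFunctor, hinv]
    exact psi_conj_iso u⁻¹
  have hmem2 : ∀ τ : MulAut S, Theta S τ ∈ CatAut.innerSubgroup (FreeAct S) →
      τ ∈ innerMonSubgroup S := by
    intro τ hτ
    have h1 : Nonempty (Psi τ⁻¹ ≅ 𝟭 (FreeAct S)) := hτ
    have h2 := iso_to_inner τ⁻¹ h1
    simpa using (innerMonSubgroup S).inv_mem h2
  have hker : ∀ τ ∈ innerMonSubgroup S,
      ((QuotientGroup.mk' (CatAut.innerSubgroup (FreeAct S))).comp (Theta S)) τ = 1 := by
    intro τ hτ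
    rw [MonoidHom.comp_apply, QuotientGroup.mk'_apply, QuotientGroup.eq_one_iff]
    exact hmem1 τ hτ
  let φQ : (MulAut S ⧸ innerMonSubgroup S) →* (CatAut (FreeAct S) ⧸ CatAut.innerSubgroup (FreeAct S)) :=
    QuotientGroup.lift (innerMonSubgroup S)
      ((QuotientGroup.mk' (CatAut.innerSubgroup (FreeAct S))).comp (Theta S)) hker
  have hφmk : ∀ τ : MulAut S, φQ (QuotientGroup.mk τ)
      = QuotientGroup.mk (Theta S τ) := fun τ => rfl
  have hinj : Function.Injective φQ := by
    rw [injective_iff_map_eq_one]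
    intro q hq
    obtain ⟨τ, rfl⟩ := QuotientGroup.mk_surjective q
    rw [hφmk, QuotientGroup.eq_one_iff] at hq
    rw [QuotientGroup.eq_one_iff]
    exact hmem2 τ hq
  have hsur : Function.Surjective φQ := by
    intro q
    obtain ⟨a, rfl⟩ := QuotientGroup.mk_surjective q
    obtain ⟨σ, ⟨e⟩⟩ := exists_psi_iso a.toFunctor a.invFunctor a.comp_inv a.inv_comp
    refine ⟨QuotientGroup.mk σ⁻¹, ?_⟩
    rw [hφmk]
    rw [QuotientGroup.eq]
    show (Theta S σ⁻¹)⁻¹ * a ∈ CatAut.innerSubgroup (FreeAct S)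
    show Nonempty (((Theta S σ⁻¹)⁻¹ * a).toFunctor ≅ 𝟭 (FreeAct S))
    have hfun : ((Theta S σ⁻¹)⁻¹ * a).toFunctor = Psi σ⁻¹ ⋙ a.toFunctor := rfl
    rw [hfun]
    exact ⟨Functor.isoWhiskerLeft (Psi σ⁻¹) e.symm ≪≫
      eqToIso (by rw [Psi_comp, mul_inv_cancel, Psi_one])⟩
  exact ⟨(MulEquiv.ofBijective φQ ⟨hinj, hsur⟩).symm⟩
end
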